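/- arXiv:1701.06080 — 3 statements merged into one kernel-verified Lean document; each statement's English description precedes it below -/
import Mathlib

section
/- Let Γ be a self-adjoint operator with 0 ≤ Γ ≤ 1 satisfying the particle-hole symmetry J* Γ J = 1 − \overline{Γ}, and such that Γ ln Γ is trace class. Then Tr(Γ ln Γ) = Tr((1 − Γ) ln(1 − Γ)), and hence the entropy S(Γ) = −Tr(Γ ln Γ) equals Tr g(Γ) where g(λ) = −(1/2)(λ ln λ + (1−λ) ln(1−λ)). -/
open scoped InnerProductSpace ComplexConjugate

/-- Let `Γ` be a self-adjoint operator with `0 ≤ Γ ≤ 1` (given here by an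
orthonormal eigenbasis `e` with eigenvalues `λ i ∈ [0,1]`) on a Hilbert space `K`
(playing the role of `H ⊕ H`), satisfying the particle-hole symmetry
`J* Γ J = 1 − Γ̄`, where `J` is the (unitary) symplectic operator with `J² = −1` and
`Γ̄ = C Γ C` for a conjugation `C`.  If `Γ ln Γ` is trace class, then
`Tr(Γ ln Γ) = Tr((1 − Γ) ln(1 − Γ))`, and hence the entropy `S(Γ) = −Tr(Γ ln Γ)`
equals `Tr g(Γ)` with `g(λ) = −(1/2)(λ ln λ + (1−λ) ln(1−λ))` (convention
`0 ln 0 = 0`). -/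
theorem stmt_3 {K : Type*} [NormedAddCommGroup K] [InnerProductSpace ℂ K] [CompleteSpace K]
    {ι : Type*}
    (Γ J : K →L[ℂ] K) (C : K → K)
    (hJJ : ∀ x, J (J x) = -x)
    (hJiso : ∀ x y, ⟪J x, J y⟫_ℂ = ⟪x, y⟫_ℂ)
    (hCC : ∀ x, C (C x) = x)
    (hCadd : ∀ x y, C (x + y) = C x + C y)
    (hCsmul : ∀ (c : ℂ) (x : K), C (c • x) = conj c • C x)
    (hCinner : ∀ x y, ⟪C x, C y⟫_ℂ = ⟪y, x⟫_ℂ)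
    (e : HilbertBasis ι ℂ K) (lam : ι → ℝ)
    (heig : ∀ i, Γ (e i) = (lam i : ℂ) • e i)
    (hlam0 : ∀ i, 0 ≤ lam i) (hlam1 : ∀ i, lam i ≤ 1)
    (hsym : ∀ x, ContinuousLinearMap.adjoint J (Γ (J x)) = x - C (Γ (C x)))
    (htc : Summable fun i => lam i * Real.log (lam i)) :
    (∑' i, lam i * Real.log (lam i)) = (∑' i, (1 - lam i) * Real.log (1 - lam i)) ∧
    (-∑' i, lam i * Real.log (lam i))
      = ∑' i, -(1 / 2) * (lam i * Real.log (lam i) + (1 - lam i) * Real.log (1 - lam i)) := by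
  -- ## Part 1: operator-theoretic preliminaries
  have hJadj : ∀ x, ContinuousLinearMap.adjoint J x = -(J x) := by
    intro x
    apply ext_inner_right ℂ
    intro y
    rw [ContinuousLinearMap.adjoint_inner_left, inner_neg_left]
    have hx : x = J (J (-x)) := by rw [hJJ, neg_neg]
    calc ⟪x, J y⟫_ℂ = ⟪J (J (-x)), J y⟫_ℂ := by rw [← hx]
      _ = ⟪J (-x), y⟫_ℂ := hJiso _ _
      _ = -⟪J x, y⟫_ℂ := by rw [map_neg, inner_neg_left]
  -- `J (C (e i))` is an eigenvector of `Γ` with eigenvalue `1 - lam i`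
  have hveig : ∀ i, Γ (J (C (e i))) = ((1 - lam i : ℝ) : ℂ) • J (C (e i)) := by
    intro i
    have h1 := hsym (C (e i))
    rw [hCC, heig i, hCsmul, Complex.conj_ofReal, hJadj] at h1
    have h2 : J (Γ (J (C (e i)))) = -(C (e i) - (lam i : ℂ) • C (e i)) := by
      rw [← h1, neg_neg]
    have h3 := congrArg J h2
    rw [hJJ] at h3
    have h4 : Γ (J (C (e i))) = J (C (e i) - (lam i : ℂ) • C (e i)) := by
      have := congrArg Neg.neg h3
      rw [neg_neg, map_neg, neg_neg] at this
      exact this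
    rw [h4, map_sub, map_smul]
    push_cast
    rw [sub_smul, one_smul]
  -- coefficient uniqueness in the Hilbert basis
  have hext : ∀ x y : K, (∀ i, ⟪e i, x⟫_ℂ = ⟪e i, y⟫_ℂ) → x = y := by
    intro x y h
    apply e.repr.injective
    apply lp.ext
    funext i
    rw [e.repr_apply_apply, e.repr_apply_apply]
    exact h i
  have hadjΓ : ∀ i, ContinuousLinearMap.adjoint Γ (e i) = (lam i : ℂ) • e i := by
    intro i
    apply hext
    intro k
    rw [ContinuousLinearMap.adjoint_inner_right, heig k, inner_smul_left,
      inner_smul_right, Complex.conj_ofReal]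
    rcases eq_or_ne k i with rfl | hki
    · rfl
    · rw [e.orthonormal.2 hki, mul_zero, mul_zero]
  -- orthogonality of eigenvectors for distinct eigenvalues
  have hkey0 : ∀ i j, lam i ≠ 1 - lam j → ⟪J (C (e j)), e i⟫_ℂ = 0 := by
    intro i j hne
    have h1 : ⟪J (C (e j)), ContinuousLinearMap.adjoint Γ (e i)⟫_ℂ
        = (lam i : ℂ) * ⟪J (C (e j)), e i⟫_ℂ := by
      rw [hadjΓ, inner_smul_right]
    have h2 : ⟪J (C (e j)), ContinuousLinearMap.adjoint Γ (e i)⟫_ℂ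
        = ((1 - lam j : ℝ) : ℂ) * ⟪J (C (e j)), e i⟫_ℂ := by
      rw [ContinuousLinearMap.adjoint_inner_right, hveig, inner_smul_left, Complex.conj_ofReal]
    have h3 : ((lam i : ℂ) - ((1 - lam j : ℝ) : ℂ)) * ⟪J (C (e j)), e i⟫_ℂ = 0 := by
      rw [sub_mul, ← h1, ← h2, sub_self]
    rcases mul_eq_zero.mp h3 with h | h
    · exfalso
      apply hne
      have := sub_eq_zero.mp h
      exact_mod_cast this
    · exact h
  -- norm preservation
  have hCnorm : ∀ x : K, ‖C x‖ = ‖x‖ := by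
    intro x
    have h := hCinner x x
    rw [inner_self_eq_norm_sq_to_K, inner_self_eq_norm_sq_to_K] at h
    have h2 : (‖C x‖ : ℝ) ^ 2 = (‖x‖ : ℝ) ^ 2 := by exact_mod_cast h
    exact sq_eq_sq₀ (norm_nonneg _) (norm_nonneg _) |>.mp h2
  have hJnorm : ∀ x : K, ‖J x‖ = ‖x‖ := by
    intro x
    have h := hJiso x x
    rw [inner_self_eq_norm_sq_to_K, inner_self_eq_norm_sq_to_K] at h
    have h2 : (‖J x‖ : ℝ) ^ 2 = (‖x‖ : ℝ) ^ 2 := by exact_mod_cast h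
    exact sq_eq_sq₀ (norm_nonneg _) (norm_nonneg _) |>.mp h2
  -- antiunitarity transfer of coefficients
  have hcoef : ∀ i j, ⟪J (C (e j)), e i⟫_ℂ = -⟪C (J (e i)), e j⟫_ℂ := by
    intro i j
    have hx : e i = J (J (-(e i))) := by rw [hJJ, neg_neg]
    calc ⟪J (C (e j)), e i⟫_ℂ = ⟪J (C (e j)), J (J (-(e i)))⟫_ℂ := by rw [← hx]
      _ = ⟪C (e j), J (-(e i))⟫_ℂ := hJiso _ _
      _ = ⟪C (e j), C (C (J (-(e i))))⟫_ℂ := by rw [hCC]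
      _ = ⟪C (J (-(e i))), e j⟫_ℂ := hCinner _ _
      _ = -⟪C (J (e i)), e j⟫_ℂ := by
          have h : C (J (-(e i))) = -(C (J (e i))) := by
            rw [map_neg]
            have h5 : -(J (e i)) = ((-1 : ℂ)) • (J (e i)) := by simp
            rw [h5, hCsmul]
            simp
          rw [h, inner_neg_left]
  -- Parseval identity
  have parseval : ∀ x : K, HasSum (fun i => ‖⟪e i, x⟫_ℂ‖ ^ 2) (‖x‖ ^ 2) := by
    intro x
    have h := e.hasSum_inner_mul_inner x x
    have h2 : ∀ i, ⟪x, e i⟫_ℂ * ⟪e i, x⟫_ℂ = ((‖⟪e i, x⟫_ℂ‖ ^ 2 : ℝ) : ℂ) := by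
      intro i
      rw [← inner_conj_symm x (e i), RCLike.conj_mul]
      norm_cast
    rw [funext h2, inner_self_eq_norm_sq_to_K] at h
    exact Complex.hasSum_ofReal.mp (by convert h using 1; push_cast; norm_cast; exact Complex.ofReal_pow _ _)
  -- ## Part 2: the coefficient matrix
  set c : ι → ι → ℝ := fun i j => ‖⟪J (C (e j)), e i⟫_ℂ‖ ^ 2 with hc
  have hc0 : ∀ i j, 0 ≤ c i j := fun i j => sq_nonneg _
  have hrow : ∀ i, HasSum (fun j => c i j) 1 := by
    intro i
    have h := parseval (C (J (e i)))
    have hn : ‖C (J (e i))‖ ^ 2 = 1 := by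
      rw [hCnorm, hJnorm, e.orthonormal.1 i, one_pow]
    rw [hn] at h
    refine h.congr_fun fun j => ?_
    simp only [hc]
    rw [hcoef i j, norm_neg, ← norm_inner_symm]
  have hcol : ∀ j, HasSum (fun i => c i j) 1 := by
    intro j
    have h := parseval (J (C (e j)))
    have hn : ‖J (C (e j))‖ ^ 2 = 1 := by
      rw [hJnorm, hCnorm, e.orthonormal.1 j, one_pow]
    rw [hn] at h
    refine h.congr_fun fun i => ?_
    simp only [hc]
    rw [← norm_inner_symm]
  have hkey : ∀ i j, lam i ≠ 1 - lam j → c i j = 0 := by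
    intro i j h
    simp only [hc]
    rw [hkey0 i j h, norm_zero]
    norm_num
  -- ## Part 3: the summation argument
  set F : ι → ℝ := fun i => -(lam i * Real.log (lam i)) with hF
  set G : ι → ℝ := fun j => -((1 - lam j) * Real.log (1 - lam j)) with hG
  have hF0 : ∀ i, 0 ≤ F i := by
    intro i
    have h := Real.log_nonpos (hlam0 i) (hlam1 i)
    have := hlam0 i
    simp only [hF]
    nlinarith
  have hG0 : ∀ j, 0 ≤ G j := by
    intro j
    have ha : (0:ℝ) ≤ 1 - lam j := by linarith [hlam1 j]
    have hb : 1 - lam j ≤ 1 := by linarith [hlam0 j]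
    have h := Real.log_nonpos ha hb
    simp only [hG]
    nlinarith
  have hFG : ∀ i j, c i j * F i = c i j * G j := by
    intro i j
    rcases eq_or_ne (lam i) (1 - lam j) with h | h
    · simp only [hF, hG, h]
    · rw [hkey i j h, zero_mul, zero_mul]
  have hA : ∀ i, (∑' j, ENNReal.ofReal (c i j * F i)) = ENNReal.ofReal (F i) := by
    intro i
    calc (∑' j, ENNReal.ofReal (c i j * F i))
        = ∑' j, ENNReal.ofReal (c i j) * ENNReal.ofReal (F i) := by
          congr 1; funext j; rw [ENNReal.ofReal_mul (hc0 i j)]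
      _ = (∑' j, ENNReal.ofReal (c i j)) * ENNReal.ofReal (F i) := ENNReal.tsum_mul_right
      _ = ENNReal.ofReal (F i) := by
          rw [← ENNReal.ofReal_tsum_of_nonneg (hc0 i) (hrow i).summable, (hrow i).tsum_eq,
            ENNReal.ofReal_one, one_mul]
  have hB : ∀ j, (∑' i, ENNReal.ofReal (c i j * F i)) = ENNReal.ofReal (G j) := by
    intro j
    calc (∑' i, ENNReal.ofReal (c i j * F i))
        = ∑' i, ENNReal.ofReal (c i j) * ENNReal.ofReal (G j) := by
          congr 1; funext i; rw [hFG i j, ENNReal.ofReal_mul (hc0 i j)]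
      _ = (∑' i, ENNReal.ofReal (c i j)) * ENNReal.ofReal (G j) := ENNReal.tsum_mul_right
      _ = ENNReal.ofReal (G j) := by
          rw [← ENNReal.ofReal_tsum_of_nonneg (fun i => hc0 i j) (hcol j).summable,
            (hcol j).tsum_eq, ENNReal.ofReal_one, one_mul]
  have hswap : ∑' i, ENNReal.ofReal (F i) = ∑' j, ENNReal.ofReal (G j) := by
    calc ∑' i, ENNReal.ofReal (F i) = ∑' i, ∑' j, ENNReal.ofReal (c i j * F i) :=
          (tsum_congr hA).symm
      _ = ∑' j, ∑' i, ENNReal.ofReal (c i j * F i) := ENNReal.tsum_comm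
      _ = ∑' j, ENNReal.ofReal (G j) := tsum_congr hB
  have hFsum : Summable F := htc.neg
  have hfin : ∑' i, ENNReal.ofReal (F i) ≠ ⊤ := by
    rw [← ENNReal.ofReal_tsum_of_nonneg hF0 hFsum]
    exact ENNReal.ofReal_ne_top
  have hGsum : Summable G := by
    have h1 : ∑' j, ENNReal.ofReal (G j) ≠ ⊤ := by rw [← hswap]; exact hfin
    have h2 : (∑' j, ((G j).toNNReal : ENNReal)) ≠ ⊤ := h1
    have h3 := ENNReal.tsum_coe_ne_top_iff_summable.mp h2
    have h4 := NNReal.summable_coe.mpr h3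
    refine h4.congr fun j => ?_
    exact Real.coe_toNNReal _ (hG0 j)
  have hSF : ∑' i, F i = (∑' i, ENNReal.ofReal (F i)).toReal := by
    rw [← ENNReal.ofReal_tsum_of_nonneg hF0 hFsum, ENNReal.toReal_ofReal (tsum_nonneg hF0)]
  have hSG : ∑' j, G j = (∑' j, ENNReal.ofReal (G j)).toReal := by
    rw [← ENNReal.ofReal_tsum_of_nonneg hG0 hGsum, ENNReal.toReal_ofReal (tsum_nonneg hG0)]
  have hmain : ∑' i, F i = ∑' j, G j := by rw [hSF, hSG, hswap]
  have h1 : (∑' i, lam i * Real.log (lam i)) = (∑' i, (1 - lam i) * Real.log (1 - lam i)) := by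
    have e1 : (∑' i, lam i * Real.log (lam i)) = -∑' i, F i := by
      rw [← tsum_neg]; congr 1; funext i; simp [hF]
    have e2 : (∑' i, (1 - lam i) * Real.log (1 - lam i)) = -∑' j, G j := by
      rw [← tsum_neg]; congr 1; funext j; simp [hG]
    rw [e1, e2, hmain]
  refine ⟨h1, ?_⟩
  have hy : Summable fun j => (1 - lam j) * Real.log (1 - lam j) := by
    have := hGsum.neg
    refine this.congr fun j => ?_
    simp [hG]
  rw [tsum_mul_left, Summable.tsum_add htc hy, ← h1]
  ring
end

section
/- Let γ, α be bounded operators on a Hilbert space H with γ self-adjoint, and suppose the block operator Γ = [[γ, α],[α*, 1 − \overline{γ}]] satisfies 0 ≤ Γ ≤ 1. Then: (1) 0 ≤ Γ(1 − Γ) ≤ 1; (2) α α* ≤ γ(1 − γ) and α* α ≤ \overline{γ}(1 − \overline{γ}); (3) for any bounded operator M, if M γ M* is trace class then M α α* M* is trace class and Tr(M α α* M*) ≤ Tr(M γ M*). -/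
open scoped InnerProductSpace ComplexConjugate

set_option maxHeartbeats 1000000 in
/-- Let `γ`, `α` be bounded operators on `H` with `γ` self-adjoint, and
suppose the block operator `Γ = [[γ, α],[α*, 1 − γ̄]]` on `H ⊕ H` satisfies
`0 ≤ Γ ≤ 1` (expressed via its quadratic form).  Then:
(1) `0 ≤ Γ(1 − Γ) ≤ 1` (again via the quadratic form);
(2) `α α* ≤ γ(1 − γ)` and `α* α ≤ γ̄(1 − γ̄)` in the Loewner order;
(3) for any bounded `M`, if `M γ M*` is trace class (its basis trace sums), then so is
`M α α* M*` and `Tr(M α α* M*) ≤ Tr(M γ M*)`. -/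
theorem stmt_5 {H : Type*} {ι : Type*} [NormedAddCommGroup H] [InnerProductSpace ℂ H]
    [CompleteSpace H]
    (C : H → H)
    (hCC : ∀ x, C (C x) = x)
    (hCadd : ∀ x y, C (x + y) = C x + C y)
    (hCsmul : ∀ (c : ℂ) (x : H), C (c • x) = conj c • C x)
    (hCinner : ∀ x y, ⟪C x, C y⟫_ℂ = ⟪y, x⟫_ℂ)
    (γ α γbar : H →L[ℂ] H) (hγ : IsSelfAdjoint γ)
    (hγbar : ∀ x, γbar x = C (γ (C x)))
    (Γfun : H × H → H × H)
    (hΓ : ∀ p, Γfun p = (γ p.1 + α p.2,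
      ContinuousLinearMap.adjoint α p.1 + p.2 - γbar p.2))
    (hΓpos : ∀ p : H × H, 0 ≤ (⟪p.1, (Γfun p).1⟫_ℂ + ⟪p.2, (Γfun p).2⟫_ℂ).re)
    (hΓle1 : ∀ p : H × H,
      (⟪p.1, (Γfun p).1⟫_ℂ + ⟪p.2, (Γfun p).2⟫_ℂ).re ≤ ‖p.1‖ ^ 2 + ‖p.2‖ ^ 2) :
    -- (1): 0 ≤ Γ(1−Γ) ≤ 1
    ((∀ p : H × H,
        0 ≤ (⟪p.1, (Γfun (p - Γfun p)).1⟫_ℂ + ⟪p.2, (Γfun (p - Γfun p)).2⟫_ℂ).re) ∧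
     (∀ p : H × H,
        (⟪p.1, (Γfun (p - Γfun p)).1⟫_ℂ + ⟪p.2, (Γfun (p - Γfun p)).2⟫_ℂ).re
          ≤ ‖p.1‖ ^ 2 + ‖p.2‖ ^ 2)) ∧
    -- (2): αα* ≤ γ(1−γ) and α*α ≤ γ̄(1−γ̄)
    ((γ * (1 - γ) - α * ContinuousLinearMap.adjoint α).IsPositive ∧
     (γbar * (1 - γbar) - ContinuousLinearMap.adjoint α * α).IsPositive) ∧
    -- (3): Tr(M αα* M*) ≤ Tr(M γ M*)
    (∀ (M : H →L[ℂ] H) (e : HilbertBasis ι ℂ H),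
      Summable (fun i => (⟪e i, (M * γ * ContinuousLinearMap.adjoint M) (e i)⟫_ℂ).re) →
      Summable (fun i => (⟪e i,
        (M * (α * ContinuousLinearMap.adjoint α) * ContinuousLinearMap.adjoint M)
          (e i)⟫_ℂ).re) ∧
      (∑' i, (⟪e i,
          (M * (α * ContinuousLinearMap.adjoint α) * ContinuousLinearMap.adjoint M)
            (e i)⟫_ℂ).re)
        ≤ ∑' i, (⟪e i, (M * γ * ContinuousLinearMap.adjoint M) (e i)⟫_ℂ).re) := by
  classical
  -- symmetry of γ
  have hγsymm : ∀ x y : H, ⟪x, γ y⟫_ℂ = ⟪γ x, y⟫_ℂ := by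
    intro x y
    calc ⟪x, γ y⟫_ℂ = ⟪ContinuousLinearMap.adjoint γ x, y⟫_ℂ := by
          rw [ContinuousLinearMap.adjoint_inner_left]
      _ = ⟪γ x, y⟫_ℂ := by rw [hγ.adjoint_eq]
  -- symmetry of γbar
  have hbar_symm : ∀ x y : H, ⟪γbar x, y⟫_ℂ = ⟪x, γbar y⟫_ℂ := by
    intro x y
    calc ⟪γbar x, y⟫_ℂ = ⟪C (γ (C x)), C (C y)⟫_ℂ := by rw [hγbar, hCC]
      _ = ⟪C y, γ (C x)⟫_ℂ := hCinner _ _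
      _ = ⟪γ (C y), C x⟫_ℂ := hγsymm _ _
      _ = ⟪C (C (γ (C y))), C x⟫_ℂ := by rw [hCC]
      _ = ⟪x, C (γ (C y))⟫_ℂ := hCinner _ _
      _ = ⟪x, γbar y⟫_ℂ := by rw [hγbar]
  -- Γfun is additive w.r.t. subtraction
  have hsub : ∀ p q : H × H, Γfun (p - q) = Γfun p - Γfun q := by
    intro p q
    rw [hΓ, hΓ, hΓ]
    simp only [Prod.fst_sub, Prod.snd_sub, map_sub, Prod.mk_sub_mk, Prod.mk.injEq]
    constructor <;> abel
  -- symmetry of Γ quadratic form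
  have hsymm : ∀ p q : H × H,
      ⟪p.1, (Γfun q).1⟫_ℂ + ⟪p.2, (Γfun q).2⟫_ℂ
        = ⟪(Γfun p).1, q.1⟫_ℂ + ⟪(Γfun p).2, q.2⟫_ℂ := by
    intro p q
    simp only [hΓ]
    simp only [inner_add_right, inner_sub_right, inner_add_left, inner_sub_left]
    rw [hγsymm p.1 q.1, hbar_symm p.2 q.2,
      ContinuousLinearMap.adjoint_inner_right,
      ContinuousLinearMap.adjoint_inner_left]
    ring
  -- complex identity for Γ(1-Γ)
  have e1 : ∀ p : H × H,
      ⟪p.1, (Γfun (p - Γfun p)).1⟫_ℂ + ⟪p.2, (Γfun (p - Γfun p)).2⟫_ℂ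
        = (⟪p.1, (Γfun p).1⟫_ℂ + ⟪p.2, (Γfun p).2⟫_ℂ)
          - (⟪(Γfun p).1, (Γfun p).1⟫_ℂ + ⟪(Γfun p).2, (Γfun p).2⟫_ℂ) := by
    intro p
    rw [hsub]
    simp only [Prod.fst_sub, Prod.snd_sub, inner_sub_right]
    linear_combination -hsymm p (Γfun p)
  have key_id : ∀ p : H × H,
      (⟪p.1, (Γfun (p - Γfun p)).1⟫_ℂ + ⟪p.2, (Γfun (p - Γfun p)).2⟫_ℂ).re
        = (⟪p.1, (Γfun p).1⟫_ℂ + ⟪p.2, (Γfun p).2⟫_ℂ).re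
          - (‖(Γfun p).1‖ ^ 2 + ‖(Γfun p).2‖ ^ 2) := by
    intro p
    rw [e1 p]
    rw [inner_self_eq_norm_sq_to_K (𝕜 := ℂ), inner_self_eq_norm_sq_to_K (𝕜 := ℂ)]
    simp [Complex.sub_re, Complex.add_re, ← Complex.ofReal_pow]
  -- the key inequality: ‖Γp‖² ≤ ⟪p, Γp⟫
  have key_ge : ∀ p : H × H,
      ‖(Γfun p).1‖ ^ 2 + ‖(Γfun p).2‖ ^ 2
        ≤ (⟪p.1, (Γfun p).1⟫_ℂ + ⟪p.2, (Γfun p).2⟫_ℂ).re := by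
    intro p
    have e2 : ⟪(p - Γfun p).1, (Γfun (p - Γfun p)).1⟫_ℂ
          + ⟪(p - Γfun p).2, (Γfun (p - Γfun p)).2⟫_ℂ
        = (⟪p.1, (Γfun p).1⟫_ℂ + ⟪p.2, (Γfun p).2⟫_ℂ)
          - (⟪(Γfun p).1, (Γfun p).1⟫_ℂ + ⟪(Γfun p).2, (Γfun p).2⟫_ℂ)
          - (⟪(Γfun p).1, (Γfun p).1⟫_ℂ + ⟪(Γfun p).2, (Γfun p).2⟫_ℂ)
          + (⟪(Γfun p).1, (Γfun (Γfun p)).1⟫_ℂ + ⟪(Γfun p).2, (Γfun (Γfun p)).2⟫_ℂ) := by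
      rw [hsub]
      simp only [Prod.fst_sub, Prod.snd_sub, inner_sub_right, inner_sub_left]
      linear_combination -hsymm p (Γfun p)
    have hp := hΓpos (p - Γfun p)
    rw [e2] at hp
    have hq := hΓle1 (Γfun p)
    have hn : (⟪(Γfun p).1, (Γfun p).1⟫_ℂ + ⟪(Γfun p).2, (Γfun p).2⟫_ℂ).re
        = ‖(Γfun p).1‖ ^ 2 + ‖(Γfun p).2‖ ^ 2 := by
      rw [inner_self_eq_norm_sq_to_K (𝕜 := ℂ), inner_self_eq_norm_sq_to_K (𝕜 := ℂ)]
      simp [Complex.add_re, ← Complex.ofReal_pow]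
    simp only [Complex.add_re, Complex.sub_re] at hp hq hn ⊢
    linarith
  have part1a : ∀ p : H × H,
      0 ≤ (⟪p.1, (Γfun (p - Γfun p)).1⟫_ℂ + ⟪p.2, (Γfun (p - Γfun p)).2⟫_ℂ).re := by
    intro p
    rw [key_id p]
    have := key_ge p
    linarith
  have part1b : ∀ p : H × H,
      (⟪p.1, (Γfun (p - Γfun p)).1⟫_ℂ + ⟪p.2, (Γfun (p - Γfun p)).2⟫_ℂ).re
        ≤ ‖p.1‖ ^ 2 + ‖p.2‖ ^ 2 := by
    intro p
    rw [key_id p]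
    have h1 := hΓle1 p
    have h2 : (0:ℝ) ≤ ‖(Γfun p).1‖ ^ 2 + ‖(Γfun p).2‖ ^ 2 := by positivity
    linarith
  -- block inequalities
  have hblock1 : ∀ x : H,
      0 ≤ (⟪x, (γ * (1 - γ) - α * ContinuousLinearMap.adjoint α) x⟫_ℂ).re := by
    intro x
    have h := part1a (x, 0)
    simp only [hΓ, map_zero, add_zero, zero_add, sub_zero, Prod.fst_sub, Prod.snd_sub,
      zero_sub, map_sub, map_neg, inner_zero_left, inner_sub_right, inner_neg_right,
      inner_add_right] at h
    simp only [ContinuousLinearMap.sub_apply, ContinuousLinearMap.mul_apply,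
      ContinuousLinearMap.one_apply, ContinuousLinearMap.sub_apply, map_sub,
      inner_sub_right]
    simp only [Complex.add_re, Complex.sub_re, Complex.neg_re, Complex.zero_re] at h ⊢
    linarith
  have hblock2 : ∀ y : H,
      0 ≤ (⟪y, (γbar * (1 - γbar) - ContinuousLinearMap.adjoint α * α) y⟫_ℂ).re := by
    intro y
    have h := part1a (0, y)
    simp only [hΓ, map_zero, add_zero, zero_add, sub_zero, zero_sub, Prod.fst_sub,
      Prod.snd_sub, map_sub, map_neg, map_add, inner_zero_left, inner_sub_right,
      inner_neg_right, inner_add_right] at h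
    simp only [ContinuousLinearMap.sub_apply, ContinuousLinearMap.mul_apply,
      ContinuousLinearMap.one_apply, map_sub, inner_sub_right]
    simp only [Complex.add_re, Complex.sub_re, Complex.neg_re, Complex.zero_re] at h ⊢
    linarith
  -- self-adjointness of blocks
  have hγbar_sa : IsSelfAdjoint γbar := by
    rw [ContinuousLinearMap.isSelfAdjoint_iff']
    exact ((ContinuousLinearMap.eq_adjoint_iff γbar γbar).mpr
      (fun x y => (hbar_symm x y))).symm
  have hsa1 : IsSelfAdjoint (γ * (1 - γ) - α * ContinuousLinearMap.adjoint α) := by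
    rw [← ContinuousLinearMap.star_eq_adjoint]
    show star _ = _
    rw [star_sub, star_mul, star_mul, star_sub, star_one, hγ.star_eq, star_star]
    noncomm_ring
  have hsa2 : IsSelfAdjoint (γbar * (1 - γbar) - ContinuousLinearMap.adjoint α * α) := by
    rw [← ContinuousLinearMap.star_eq_adjoint]
    show star _ = _
    rw [star_sub, star_mul, star_mul, star_sub, star_one, hγbar_sa.star_eq, star_star]
    noncomm_ring
  have pos1 : (γ * (1 - γ) - α * ContinuousLinearMap.adjoint α).IsPositive := by
    refine ⟨ContinuousLinearMap.isSelfAdjoint_iff_isSymmetric.mp hsa1, fun x => ?_⟩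
    rw [ContinuousLinearMap.reApplyInnerSelf, inner_re_symm]
    have h := hblock1 x
    simp only [ContinuousLinearMap.sub_apply, ContinuousLinearMap.mul_apply,
      ContinuousLinearMap.one_apply, map_sub, inner_sub_right, Complex.sub_re, RCLike.re_to_complex] at h ⊢
    linarith
  have pos2 : (γbar * (1 - γbar) - ContinuousLinearMap.adjoint α * α).IsPositive := by
    refine ⟨ContinuousLinearMap.isSelfAdjoint_iff_isSymmetric.mp hsa2, fun x => ?_⟩
    rw [ContinuousLinearMap.reApplyInnerSelf, inner_re_symm]
    have h := hblock2 x
    simp only [ContinuousLinearMap.sub_apply, ContinuousLinearMap.mul_apply,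
      ContinuousLinearMap.one_apply, map_sub, inner_sub_right, Complex.sub_re, RCLike.re_to_complex] at h ⊢
    linarith
  -- part (3)
  have hαα_le_γ : ∀ x : H,
      (⟪x, (α * ContinuousLinearMap.adjoint α) x⟫_ℂ).re ≤ (⟪x, γ x⟫_ℂ).re := by
    intro x
    have h := hblock1 x
    have hγ2 : (⟪x, γ (γ x)⟫_ℂ).re = ‖γ x‖ ^ 2 := by
      rw [hγsymm, inner_self_eq_norm_sq_to_K (𝕜 := ℂ)]
      simp [← Complex.ofReal_pow]
    have hγ2nn : (0:ℝ) ≤ (⟪x, γ (γ x)⟫_ℂ).re := by rw [hγ2]; positivity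
    simp only [ContinuousLinearMap.sub_apply, ContinuousLinearMap.mul_apply,
      ContinuousLinearMap.one_apply, map_sub, inner_sub_right,
      Complex.sub_re] at h ⊢
    linarith
  refine ⟨⟨part1a, part1b⟩, ⟨pos1, pos2⟩, ?_⟩
  intro M e hsum
  have hterm_eq : ∀ i : ι,
      (⟪e i, (M * (α * ContinuousLinearMap.adjoint α) * ContinuousLinearMap.adjoint M)
        (e i)⟫_ℂ).re
      = (⟪ContinuousLinearMap.adjoint M (e i),
          (α * ContinuousLinearMap.adjoint α) (ContinuousLinearMap.adjoint M (e i))⟫_ℂ).re := by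
    intro i
    simp only [ContinuousLinearMap.mul_apply]
    rw [← ContinuousLinearMap.adjoint_inner_left]
  have hterm_eq' : ∀ i : ι,
      (⟪e i, (M * γ * ContinuousLinearMap.adjoint M) (e i)⟫_ℂ).re
      = (⟪ContinuousLinearMap.adjoint M (e i),
          γ (ContinuousLinearMap.adjoint M (e i))⟫_ℂ).re := by
    intro i
    simp only [ContinuousLinearMap.mul_apply]
    rw [← ContinuousLinearMap.adjoint_inner_left]
  have hnn : ∀ i : ι, 0 ≤
      (⟪e i, (M * (α * ContinuousLinearMap.adjoint α) * ContinuousLinearMap.adjoint M)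
        (e i)⟫_ℂ).re := by
    intro i
    rw [hterm_eq i]
    have : (⟪ContinuousLinearMap.adjoint M (e i),
        (α * ContinuousLinearMap.adjoint α) (ContinuousLinearMap.adjoint M (e i))⟫_ℂ)
        = ⟪ContinuousLinearMap.adjoint α (ContinuousLinearMap.adjoint M (e i)),
           ContinuousLinearMap.adjoint α (ContinuousLinearMap.adjoint M (e i))⟫_ℂ := by
      rw [ContinuousLinearMap.mul_apply, ← ContinuousLinearMap.adjoint_inner_left]
    rw [this, inner_self_eq_norm_sq_to_K (𝕜 := ℂ)]
    simp [← Complex.ofReal_pow]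
  have hle : ∀ i : ι,
      (⟪e i, (M * (α * ContinuousLinearMap.adjoint α) * ContinuousLinearMap.adjoint M)
        (e i)⟫_ℂ).re
      ≤ (⟪e i, (M * γ * ContinuousLinearMap.adjoint M) (e i)⟫_ℂ).re := by
    intro i
    rw [hterm_eq i, hterm_eq' i]
    exact hαα_le_γ _
  have hsummable : Summable (fun i =>
      (⟪e i, (M * (α * ContinuousLinearMap.adjoint α) * ContinuousLinearMap.adjoint M)
        (e i)⟫_ℂ).re) :=
    Summable.of_nonneg_of_le hnn hle hsum
  exact ⟨hsummable, Summable.tsum_le_tsum hle hsummable hsum⟩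
end

section
/- Let ξ be a positive compact self-adjoint operator that is trace class, with eigenvalues (μ_n). Then the function t ↦ ‖ξ(ξ + t)^{-1}‖_{HS}² is integrable on (0, ∞) and ∫₀^∞ ‖ξ(ξ + t)^{-1}‖_{HS}² dt = ∑_n μ_n = Tr ξ, using ∫₀^∞ μ²/(μ + t)² dt = μ for each μ > 0. -/
open scoped InnerProductSpace

open MeasureTheory Set Filter Topology

/-- Auxiliary: `∫₀^∞ m²/(m+t)² dt = m` with integrability, for `m > 0`. -/
lemma aux_key {m : ℝ} (hm : 0 < m) :
    IntegrableOn (fun t : ℝ => m ^ 2 / (m + t) ^ 2) (Set.Ioi 0) ∧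
    (∫ t in Set.Ioi (0:ℝ), m ^ 2 / (m + t) ^ 2) = m := by
  set g : ℝ → ℝ := fun t => -(m ^ 2 * (m + t)⁻¹) with hg
  have hderiv : ∀ x ∈ Set.Ici (0:ℝ), HasDerivAt g (m ^ 2 / (m + x) ^ 2) x := by
    intro x hx
    have hne : m + x ≠ 0 := by have := hx.out; intro h; nlinarith
    have h1 : HasDerivAt (fun t : ℝ => m + t) 1 x := by
      simpa using (hasDerivAt_id x).const_add m
    have h2 : HasDerivAt (fun t : ℝ => (m + t)⁻¹) (-1 / (m + x) ^ 2) x := h1.inv hne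
    have h3 := (h2.const_mul (m ^ 2)).neg
    convert h3 using 1
    case e'_9 => ring
    all_goals rfl
  have hpos' : ∀ x ∈ Set.Ioi (0:ℝ), 0 ≤ m ^ 2 / (m + x) ^ 2 := by
    intro x hx; positivity
  have hlim : Tendsto g atTop (𝓝 0) := by
    have : Tendsto (fun t : ℝ => (m + t)⁻¹) atTop (𝓝 0) := by
      apply Filter.Tendsto.inv_tendsto_atTop
      exact tendsto_atTop_add_const_left _ m tendsto_id
    have := (this.const_mul (m ^ 2)).neg
    simpa using this
  constructor
  · exact integrableOn_Ioi_deriv_of_nonneg' hderiv hpos' hlim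
  · have := integral_Ioi_of_hasDerivAt_of_nonneg' hderiv hpos' hlim
    rw [this]
    have hne : m ≠ 0 := hm.ne'
    simp [hg]
    field_simp

/-- for a positive compact self-adjoint trace-class operator `ξ` with
eigenvalues `μ n` (given by an orthonormal eigenbasis), the function
`t ↦ ‖ξ(ξ+t)⁻¹‖²_{HS} = ∑_n μ_n²/(μ_n+t)²` is integrable on `(0,∞)` and
`∫₀^∞ ∑_n μ_n²/(μ_n+t)² dt = ∑_n μ_n = Tr ξ`, using `∫₀^∞ μ²/(μ+t)² dt = μ` for
each `μ > 0`. -/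
theorem stmt_6 {H : Type*} {ι : Type*} [NormedAddCommGroup H] [InnerProductSpace ℂ H]
    [CompleteSpace H] [Countable ι]
    (ξ : H →L[ℂ] H) (hpos : ξ.IsPositive)
    (e : HilbertBasis ι ℂ H) (μ : ι → ℝ)
    (hμ : ∀ i, 0 ≤ μ i)
    (heig : ∀ i, ξ (e i) = (μ i : ℂ) • e i)
    (htc : Summable μ) :
    (∀ m : ℝ, 0 < m → (∫ t in Set.Ioi (0:ℝ), m ^ 2 / (m + t) ^ 2) = m) ∧
    MeasureTheory.IntegrableOn (fun t : ℝ => ∑' i, (μ i) ^ 2 / (μ i + t) ^ 2)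
      (Set.Ioi 0) ∧
    (∫ t in Set.Ioi (0:ℝ), ∑' i, (μ i) ^ 2 / (μ i + t) ^ 2) = ∑' i, μ i := by
  -- measurability of each term
  have hmeas : ∀ i, Measurable (fun t : ℝ => (μ i) ^ 2 / (μ i + t) ^ 2) := by
    intro i
    exact measurable_const.div ((measurable_const.add measurable_id).pow measurable_const)
  -- lintegral of each term
  have hlint : ∀ i, (∫⁻ t in Set.Ioi (0:ℝ), ENNReal.ofReal ((μ i) ^ 2 / (μ i + t) ^ 2))
      = ENNReal.ofReal (μ i) := by
    intro i
    rcases (hμ i).eq_or_lt with h | h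
    · have : ∀ t : ℝ, (μ i) ^ 2 / (μ i + t) ^ 2 = 0 := by
        intro t; rw [← h]; simp
      simp [this, ← h]
    · obtain ⟨hint, heq⟩ := aux_key h
      rw [← ofReal_integral_eq_lintegral_ofReal hint
        (Filter.Eventually.of_forall (fun t => by positivity)), heq]
  -- the swapped lintegral
  have hswap : (∫⁻ t in Set.Ioi (0:ℝ), ∑' i, ENNReal.ofReal ((μ i) ^ 2 / (μ i + t) ^ 2))
      = ENNReal.ofReal (∑' i, μ i) := by
    rw [lintegral_tsum (fun i => ((hmeas i).ennreal_ofReal).aemeasurable)]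
    simp_rw [hlint]
    exact (ENNReal.ofReal_tsum_of_nonneg hμ htc).symm
  -- pointwise summability on Ioi 0
  have hsumm : ∀ t : ℝ, t ∈ Set.Ioi (0:ℝ) → Summable (fun i => (μ i) ^ 2 / (μ i + t) ^ 2) := by
    intro t ht
    refine Summable.of_nonneg_of_le (fun i => by positivity) (fun i => ?_) (htc.mul_right t⁻¹)
    have htpos : (0:ℝ) < t := ht.out
    have hden : (0:ℝ) < μ i + t := by linarith [hμ i]
    have h1 : μ i / (μ i + t) ≤ 1 := by
      apply div_le_one_of_le₀ (by linarith) hden.le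
    have h2 : μ i / (μ i + t) ≤ μ i / t := by
      apply div_le_div_of_nonneg_left (hμ i) htpos (by linarith [hμ i])
    have h3 : 0 ≤ μ i / (μ i + t) := div_nonneg (hμ i) hden.le
    calc (μ i) ^ 2 / (μ i + t) ^ 2 = (μ i / (μ i + t)) * (μ i / (μ i + t)) := by
          rw [div_mul_div_comm]; ring_nf
      _ ≤ (μ i / t) * 1 := mul_le_mul h2 h1 h3 (div_nonneg (hμ i) htpos.le)
      _ = μ i * t⁻¹ := by rw [mul_one, div_eq_mul_inv]
  -- pointwise: ofReal of tsum = tsum of ofReal on Ioi 0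
  have hpt : ∀ t : ℝ, t ∈ Set.Ioi (0:ℝ) →
      ENNReal.ofReal (∑' i, (μ i) ^ 2 / (μ i + t) ^ 2)
        = ∑' i, ENNReal.ofReal ((μ i) ^ 2 / (μ i + t) ^ 2) := by
    intro t ht
    exact ENNReal.ofReal_tsum_of_nonneg (fun i => by positivity) (hsumm t ht)
  -- a.e. version on the restricted measure
  have hptae : ∀ᵐ t ∂(volume.restrict (Set.Ioi (0:ℝ))),
      ENNReal.ofReal (∑' i, (μ i) ^ 2 / (μ i + t) ^ 2)
        = ∑' i, ENNReal.ofReal ((μ i) ^ 2 / (μ i + t) ^ 2) :=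
    (ae_restrict_iff' measurableSet_Ioi).mpr (Filter.Eventually.of_forall hpt)
  -- measurable stand-in for the tsum
  set F : ℝ → ℝ := fun t => (∑' i, ENNReal.ofReal ((μ i) ^ 2 / (μ i + t) ^ 2)).toReal with hF
  have hFmeas : Measurable F :=
    (Measurable.ennreal_tsum (fun i => (hmeas i).ennreal_ofReal)).ennreal_toReal
  have hfF : ∀ t : ℝ, t ∈ Set.Ioi (0:ℝ) →
      (∑' i, (μ i) ^ 2 / (μ i + t) ^ 2) = F t := by
    intro t ht
    rw [hF]
    dsimp only
    rw [← hpt t ht, ENNReal.toReal_ofReal (tsum_nonneg (fun i => by positivity))]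
  have hfFae : (fun t : ℝ => ∑' i, (μ i) ^ 2 / (μ i + t) ^ 2)
      =ᵐ[volume.restrict (Set.Ioi (0:ℝ))] F :=
    (ae_restrict_iff' measurableSet_Ioi).mpr (Filter.Eventually.of_forall hfF)
  have hsm : AEStronglyMeasurable (fun t : ℝ => ∑' i, (μ i) ^ 2 / (μ i + t) ^ 2)
      (volume.restrict (Set.Ioi (0:ℝ))) :=
    (hFmeas.aestronglyMeasurable).congr hfFae.symm
  have hnn : 0 ≤ᵐ[volume.restrict (Set.Ioi (0:ℝ))]
      (fun t : ℝ => ∑' i, (μ i) ^ 2 / (μ i + t) ^ 2) :=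
    Filter.Eventually.of_forall (fun t => tsum_nonneg (fun i => by positivity))
  -- finiteness of the lintegral of the tsum
  have hflint : (∫⁻ t in Set.Ioi (0:ℝ),
      ENNReal.ofReal (∑' i, (μ i) ^ 2 / (μ i + t) ^ 2)) = ENNReal.ofReal (∑' i, μ i) := by
    rw [lintegral_congr_ae hptae, hswap]
  have hint : IntegrableOn (fun t : ℝ => ∑' i, (μ i) ^ 2 / (μ i + t) ^ 2) (Set.Ioi 0) := by
    refine ⟨hsm, ?_⟩
    rw [hasFiniteIntegral_iff_ofReal hnn, hflint]
    exact ENNReal.ofReal_lt_top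
  refine ⟨fun m hm => (aux_key hm).2, hint, ?_⟩
  rw [integral_eq_lintegral_of_nonneg_ae hnn hsm, hflint,
    ENNReal.toReal_ofReal (tsum_nonneg hμ)]
end
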